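/- Suppose Θ₁, Θ₂ are symmetric matrices satisfying Θ₁ = Q̄ + φ₀ᵀ Θ₁ φ₀ and Θ₂ = Q̄ + φ₁ᵀ Θ₂ φ₁, where φ₀ = φ₁ + Ψ with φ₁ᵀ Θ₁ Ψ = 0 and Ψᵀ Θ₁ φ₁ = 0, and ρ(φ₁) < 1. Then Θ₁ - Θ₂ = ∑_{j=0}^∞ (φ₁ᵀ)ʲ (Ψᵀ Θ₁ Ψ) φ₁ʲ, and in particular Θ₁ - Θ₂ is positive semidefinite whenever Θ₁ is positive semidefinite. -/

import Mathlib

open Matrix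

open Filter in
section

section
attribute [local instance] Matrix.linftyOpNormedAddCommGroup Matrix.linftyOpNormedRing Matrix.linftyOpNormedAlgebra

lemma entry_le {N : ℕ} (M : Matrix (Fin N) (Fin N) ℝ) (i j : Fin N) : ‖M i j‖₊ ≤ ‖M‖₊ := by
  rw [Matrix.linfty_opNNNorm_def]
  refine le_trans ?_ (Finset.le_sup (f := fun i => ∑ j : Fin N, ‖M i j‖₊) (Finset.mem_univ i))
  exact Finset.single_le_sum (f := fun k => ‖M i k‖₊) (fun _ _ => zero_le) (Finset.mem_univ j)

lemma transpose_nnnorm_le {N : ℕ} (M : Matrix (Fin N) (Fin N) ℝ) :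
    ‖Mᵀ‖₊ ≤ N * ‖M‖₊ := by
  rw [Matrix.linfty_opNNNorm_def]
  apply Finset.sup_le
  intro j _
  calc ∑ i : Fin N, ‖Mᵀ j i‖₊ ≤ ∑ _i : Fin N, ‖M‖₊ :=
        Finset.sum_le_sum fun i _ => entry_le M i j
    _ = N * ‖M‖₊ := by simp [mul_comm]

lemma nnnorm_map_eq {N : ℕ} (M : Matrix (Fin N) (Fin N) ℝ) :
    ‖M.map (algebraMap ℝ ℂ)‖₊ = ‖M‖₊ := by
  simp [Matrix.linfty_opNNNorm_def, Matrix.map_apply]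

lemma geom {N : ℕ} (φ : Matrix (Fin N) (Fin N) ℝ)
    (h : spectralRadius ℂ (φ.map (algebraMap ℝ ℂ)) < 1) :
    ∃ r : NNReal, r < 1 ∧ ∀ᶠ n : ℕ in atTop, ‖φ ^ n‖₊ ≤ r ^ n := by
  haveI : CompleteSpace (Matrix (Fin N) (Fin N) ℂ) :=
    (by exact inferInstance : CompleteSpace (Fin N → Fin N → ℂ))
  set A := φ.map (algebraMap ℝ ℂ) with hA
  obtain ⟨r, hr1, hr2⟩ := ENNReal.lt_iff_exists_nnreal_btwn.mp h
  have hr : r < 1 := by exact_mod_cast hr2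
  have hT := spectrum.pow_nnnorm_pow_one_div_tendsto_nhds_spectralRadius A
  have hev : ∀ᶠ n : ℕ in atTop, (‖A ^ n‖₊ : ENNReal) ^ (1 / (n:ℝ)) < r :=
    hT.eventually_lt_const hr1
  refine ⟨r, hr, ?_⟩
  filter_upwards [hev, eventually_ge_atTop 1] with n hn hn1
  have hnpos : (0:ℝ) < n := by exact_mod_cast hn1
  have h2 : ((‖A ^ n‖₊ : ENNReal) ^ (1 / (n:ℝ))) ^ (n:ℝ) < (r : ENNReal) ^ (n:ℝ) :=
    ENNReal.rpow_lt_rpow hn hnpos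
  rw [← ENNReal.rpow_mul, one_div, inv_mul_cancel₀ (ne_of_gt hnpos), ENNReal.rpow_one,
    ENNReal.rpow_natCast] at h2
  have h3 : ‖A ^ n‖₊ ≤ r ^ n := by
    have := h2.le
    rw [← ENNReal.coe_pow] at this
    exact_mod_cast this
  have h4 : A ^ n = (φ ^ n).map (algebraMap ℝ ℂ) := by
    rw [hA]
    simpa [RingHom.mapMatrix_apply] using (map_pow (RingHom.mapMatrix (algebraMap ℝ ℂ)) φ n).symm
  rw [h4, nnnorm_map_eq] at h3
  exact h3

lemma aux_hasSum {N : ℕ} (φ C Δ : Matrix (Fin N) (Fin N) ℝ)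
    (hΔ : Δ = φᵀ * Δ * φ + C)
    (h : spectralRadius ℂ (φ.map (algebraMap ℝ ℂ)) < 1) :
    HasSum (fun j : ℕ => (φᵀ) ^ j * C * φ ^ j) Δ := by
  set f : ℕ → Matrix (Fin N) (Fin N) ℝ := fun j => (φᵀ) ^ j * C * φ ^ j with hf
  have hDC : φᵀ * Δ * φ = Δ - C := by
    conv_rhs => rw [hΔ]
    rw [add_sub_cancel_right]
  -- partial sums
  have partial_eq : ∀ n : ℕ, ∑ j ∈ Finset.range n, f j = Δ - (φᵀ) ^ n * Δ * φ ^ n := by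
    intro n
    induction n with
    | zero => simp
    | succ n ih =>
        rw [Finset.sum_range_succ, ih]
        have : (φᵀ) ^ (n+1) * Δ * φ ^ (n+1) = (φᵀ) ^ n * (Δ - C) * φ ^ n := by
          rw [← hDC, pow_succ, pow_succ']
          noncomm_ring
        rw [this, hf]
        simp only [mul_sub, sub_mul]
        abel
  obtain ⟨r, hr, hev⟩ := geom φ h
  -- bound on f
  have hbound : ∀ᶠ n : ℕ in atTop, ‖f n‖ ≤ (N * ‖C‖ * 1) * ((r:ℝ) ^ 2) ^ n := by
    filter_upwards [hev] with n hn
    have h1 : ‖f n‖₊ ≤ N * ‖φ ^ n‖₊ * ‖C‖₊ * ‖φ ^ n‖₊ := by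
      calc ‖(φᵀ) ^ n * C * φ ^ n‖₊ ≤ ‖(φᵀ) ^ n * C‖₊ * ‖φ ^ n‖₊ :=
            Matrix.linfty_opNNNorm_mul _ _
        _ ≤ ‖(φᵀ) ^ n‖₊ * ‖C‖₊ * ‖φ ^ n‖₊ := by
            gcongr; exact Matrix.linfty_opNNNorm_mul _ _
        _ ≤ N * ‖φ ^ n‖₊ * ‖C‖₊ * ‖φ ^ n‖₊ := by
            gcongr
            rw [← Matrix.transpose_pow]
            exact transpose_nnnorm_le _
    have h2 : ‖f n‖₊ ≤ N * (r ^ n) * ‖C‖₊ * (r ^ n) := by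
      refine h1.trans ?_
      gcongr <;> exact hn
    have : (‖f n‖₊ : ℝ) ≤ ((N : NNReal) * (r ^ n) * ‖C‖₊ * (r ^ n) : NNReal) := by
      exact_mod_cast h2
    refine this.trans (le_of_eq ?_)
    push_cast
    ring
  have hsum : Summable f :=
    Summable.of_norm_bounded_eventually_nat
      (((summable_geometric_of_lt_one (by positivity) (by
          have : (r:ℝ) < 1 := hr
          nlinarith [r.coe_nonneg])).mul_left _)) hbound
  obtain ⟨S, hS⟩ := hsum
  have h1 := hS.tendsto_sum_nat
  have htail : Tendsto (fun n : ℕ => (φᵀ) ^ n * Δ * φ ^ n) atTop (nhds 0) := by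
    apply squeeze_zero_norm' (a := fun n : ℕ => (N * ‖Δ‖ * 1) * ((r:ℝ) ^ 2) ^ n)
    · filter_upwards [hev] with n hn
      have h1 : ‖(φᵀ) ^ n * Δ * φ ^ n‖₊ ≤ N * ‖φ ^ n‖₊ * ‖Δ‖₊ * ‖φ ^ n‖₊ := by
        calc ‖(φᵀ) ^ n * Δ * φ ^ n‖₊ ≤ ‖(φᵀ) ^ n * Δ‖₊ * ‖φ ^ n‖₊ :=
              Matrix.linfty_opNNNorm_mul _ _
          _ ≤ ‖(φᵀ) ^ n‖₊ * ‖Δ‖₊ * ‖φ ^ n‖₊ := by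
              gcongr; exact Matrix.linfty_opNNNorm_mul _ _
          _ ≤ N * ‖φ ^ n‖₊ * ‖Δ‖₊ * ‖φ ^ n‖₊ := by
              gcongr
              rw [← Matrix.transpose_pow]
              exact transpose_nnnorm_le _
      have h2 : ‖(φᵀ) ^ n * Δ * φ ^ n‖₊ ≤ N * (r ^ n) * ‖Δ‖₊ * (r ^ n) := by
        refine h1.trans ?_
        gcongr <;> exact hn
      have : (‖(φᵀ) ^ n * Δ * φ ^ n‖₊ : ℝ) ≤ ((N : NNReal) * (r ^ n) * ‖Δ‖₊ * (r ^ n) : NNReal) := by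
        exact_mod_cast h2
      refine this.trans (le_of_eq ?_)
      push_cast
      ring
    · have : Tendsto (fun n : ℕ => ((r:ℝ) ^ 2) ^ n) atTop (nhds 0) := by
        apply tendsto_pow_atTop_nhds_zero_of_lt_one (by positivity)
        have : (r:ℝ) < 1 := hr
        nlinarith [r.coe_nonneg]
      simpa using this.const_mul (N * ‖Δ‖ * 1)
  have h2 : Tendsto (fun n : ℕ => ∑ j ∈ Finset.range n, f j) atTop (nhds Δ) := by
    simp only [partial_eq]
    simpa using (tendsto_const_nhds (x := Δ)).sub htail
  have : S = Δ := tendsto_nhds_unique h1 h2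
  rwa [this] at hS
end


end


noncomputable def specRad {N : Type*} [Fintype N] [DecidableEq N]
    (M : Matrix N N ℝ) : ENNReal :=
  spectralRadius ℂ (M.map (algebraMap ℝ ℂ))

theorem stmt4 {N : ℕ} (Qbar Θ₁ Θ₂ φ₀ φ₁ Ψ : Matrix (Fin N) (Fin N) ℝ)
    (hQ : Qbar.IsSymm) (hΘ₁s : Θ₁.IsSymm) (hΘ₂s : Θ₂.IsSymm)
    (hΘ₁ : Θ₁ = Qbar + φ₀ᵀ * Θ₁ * φ₀)
    (hΘ₂ : Θ₂ = Qbar + φ₁ᵀ * Θ₂ * φ₁)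
    (hφ : φ₀ = φ₁ + Ψ)
    (horth₁ : φ₁ᵀ * Θ₁ * Ψ = 0) (horth₂ : Ψᵀ * Θ₁ * φ₁ = 0)
    (hstab : specRad φ₁ < 1) :
    HasSum (fun j : ℕ => (φ₁ᵀ) ^ j * (Ψᵀ * Θ₁ * Ψ) * φ₁ ^ j) (Θ₁ - Θ₂) ∧
    (Θ₁.PosSemidef → (Θ₁ - Θ₂).PosSemidef) := by
  have key : Θ₁ - Θ₂ = φ₁ᵀ * (Θ₁ - Θ₂) * φ₁ + Ψᵀ * Θ₁ * Ψ := by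
    have e1 : φ₀ᵀ * Θ₁ * φ₀ = φ₁ᵀ * Θ₁ * φ₁ + Ψᵀ * Θ₁ * Ψ := by
      subst hφ
      rw [transpose_add]
      simp only [add_mul, mul_add]
      rw [show φ₁ᵀ * Θ₁ * Ψ = 0 from horth₁, show Ψᵀ * Θ₁ * φ₁ = 0 from horth₂]
      abel
    calc Θ₁ - Θ₂ = (Qbar + φ₀ᵀ * Θ₁ * φ₀) - (Qbar + φ₁ᵀ * Θ₂ * φ₁) := by rw [← hΘ₁, ← hΘ₂]
      _ = φ₀ᵀ * Θ₁ * φ₀ - φ₁ᵀ * Θ₂ * φ₁ := by abel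
      _ = φ₁ᵀ * Θ₁ * φ₁ + Ψᵀ * Θ₁ * Ψ - φ₁ᵀ * Θ₂ * φ₁ := by rw [e1]
      _ = φ₁ᵀ * (Θ₁ - Θ₂) * φ₁ + Ψᵀ * Θ₁ * Ψ := by
          simp only [mul_sub, sub_mul]
          abel
  have hs : HasSum (fun j : ℕ => (φ₁ᵀ) ^ j * (Ψᵀ * Θ₁ * Ψ) * φ₁ ^ j) (Θ₁ - Θ₂) :=
    aux_hasSum φ₁ (Ψᵀ * Θ₁ * Ψ) (Θ₁ - Θ₂) key hstab
  refine ⟨hs, fun hpsd => ?_⟩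
  have hterm : ∀ n : ℕ, ((φ₁ᵀ) ^ n * (Ψᵀ * Θ₁ * Ψ) * φ₁ ^ n).PosSemidef := by
    intro n
    have hC : (Ψᵀ * Θ₁ * Ψ).PosSemidef := by
      simpa [Matrix.conjTranspose_eq_transpose_of_trivial] using
        hpsd.conjTranspose_mul_mul_same Ψ
    have := hC.conjTranspose_mul_mul_same (φ₁ ^ n)
    simpa [Matrix.conjTranspose_eq_transpose_of_trivial, Matrix.transpose_pow,
      mul_assoc] using this
  rw [Matrix.posSemidef_iff_dotProduct_mulVec]
  constructor
  · -- Hermitian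
    rw [Matrix.IsHermitian, Matrix.conjTranspose_eq_transpose_of_trivial]
    exact (hΘ₁s.sub hΘ₂s)
  · intro x
    have hij : ∀ i j, HasSum (fun n : ℕ => ((φ₁ᵀ) ^ n * (Ψᵀ * Θ₁ * Ψ) * φ₁ ^ n) i j)
        ((Θ₁ - Θ₂) i j) := fun i j => (Pi.hasSum.mp ((Pi.hasSum.mp hs) i)) j
    have hexp : ∀ M : Matrix (Fin N) (Fin N) ℝ,
        star x ⬝ᵥ M *ᵥ x = ∑ i, ∑ j, x i * M i j * x j := by
      intro M
      simp [dotProduct, Matrix.mulVec, Finset.mul_sum, mul_assoc]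
    have hq : HasSum
        (fun n : ℕ => ∑ i, ∑ j, x i * ((φ₁ᵀ) ^ n * (Ψᵀ * Θ₁ * Ψ) * φ₁ ^ n) i j * x j)
        (∑ i, ∑ j, x i * (Θ₁ - Θ₂) i j * x j) :=
      hasSum_sum fun i _ => hasSum_sum fun j _ => ((hij i j).mul_left (x i)).mul_right (x j)
    rw [hexp]
    refine hasSum_le (fun n => ?_) hasSum_zero hq
    have := (hterm n).dotProduct_mulVec_nonneg x
    rwa [hexp] at this
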